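/- Let g be a finite-dimensional real nilpotent Lie algebra with a nice basis (e_1, …, e_n) and structure constants c_{ijk} (the coefficient of e_k in ⁅e_i, e_j⁆). Consider the finite family of root vectors α_{ijk} = ε_k − ε_i − ε_j ∈ ℝⁿ, one for each triple (i,j,k) with i < j and c_{ijk} ≠ 0, where ε_1, …, ε_n is the standard basis of ℝⁿ. If this family of vectors is linearly independent over ℝ, then ⁅e_k, ⁅e_i, e_j⁆⁆ = 0 for all indices i, j and all k with k ≠ i and k ≠ j (i.e., the nice diagram of (g, (e_i)) has no double arrows). -/

import Mathlib

/-- The structure constants of a basis of a real Lie algebra. -/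
noncomputable def structConst {g : Type*} [LieRing g] [LieAlgebra ℝ g] {n : ℕ}
    (b : Module.Basis (Fin n) ℝ g) (i j k : Fin n) : ℝ :=
  b.repr ⁅b i, b j⁆ k

/-- A basis of a real Lie algebra is *nice*. -/
def IsNiceBasis {g : Type*} [LieRing g] [LieAlgebra ℝ g] {n : ℕ}
    (b : Module.Basis (Fin n) ℝ g) : Prop :=
  (∀ i j, ∃ (k : Fin n) (c : ℝ), ⁅b i, b j⁆ = c • b k) ∧
  (∀ i k j j', structConst b i j k ≠ 0 → structConst b i j' k ≠ 0 → j = j')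

section Aux

variable {g : Type*} [LieRing g] [LieAlgebra ℝ g] {n : ℕ}

lemma structConst_swap (b : Module.Basis (Fin n) ℝ g) (i j k : Fin n) :
    structConst b j i k = - structConst b i j k := by
  rw [structConst, structConst, ← lie_skew (b j) (b i), map_neg, Finsupp.neg_apply]

lemma structConst_of_smul (b : Module.Basis (Fin n) ℝ g) {i j m : Fin n} {c : ℝ}
    (h : ⁅b i, b j⁆ = c • b m) (k : Fin n) :
    structConst b i j k = if k = m then c else 0 := by
  simp [structConst, h, Module.Basis.repr_self, Finsupp.single_apply, eq_comm]

/-- An eigenvector of `ad x` in a nilpotent Lie algebra has eigenvalue zero. -/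
lemma eigen_zero_of_nilpotent [LieRing.IsNilpotent g]
    (b : Module.Basis (Fin n) ℝ g) (x : g) (c : ℝ) (i : Fin n)
    (h : ⁅x, b i⁆ = c • b i) : c = 0 := by
  obtain ⟨N, hN⟩ := LieAlgebra.nilpotent_ad_of_nilpotent_algebra ℝ g
  have key : ∀ M : ℕ, ((LieAlgebra.ad ℝ g x) ^ M) (b i) = c ^ M • b i := by
    intro M
    induction M with
    | zero => simp
    | succ M ih =>
      rw [pow_succ, Module.End.mul_apply, LieAlgebra.ad_apply, h, map_smul, ih,
        smul_smul, pow_succ, mul_comm]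
  have h0 : (0 : g) = c ^ N • b i := by
    rw [← key N, hN x]; rfl
  have hb : b i ≠ 0 := b.ne_zero i
  have : c ^ N = 0 := by
    rcases smul_eq_zero.mp h0.symm with h | h
    · exact h
    · exact absurd h hb
  exact (pow_eq_zero_iff'.mp this).1

lemma pair_eq {α : Type*} [LinearOrder α] {a b c d : α}
    (h1 : min a b = min c d) (h2 : max a b = max c d) :
    (a = c ∧ b = d) ∨ (a = d ∧ b = c) := by
  rcases le_total a b with h | h <;> rcases le_total c d with h' | h'
  · rw [min_eq_left h, min_eq_left h'] at h1
    rw [max_eq_right h, max_eq_right h'] at h2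
    exact Or.inl ⟨h1, h2⟩
  · rw [min_eq_left h, min_eq_right h'] at h1
    rw [max_eq_right h, max_eq_left h'] at h2
    exact Or.inr ⟨h1, h2⟩
  · rw [min_eq_right h, min_eq_left h'] at h1
    rw [max_eq_left h, max_eq_right h'] at h2
    exact Or.inr ⟨h2, h1⟩
  · rw [min_eq_right h, min_eq_right h'] at h1
    rw [max_eq_left h, max_eq_left h'] at h2
    exact Or.inl ⟨h2, h1⟩

lemma single_minmax (x y z : Fin n) :
    (Pi.single z 1 - Pi.single (min x y) 1 - Pi.single (max x y) 1 : Fin n → ℝ)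
      = Pi.single z 1 - Pi.single x 1 - Pi.single y 1 := by
  rcases le_total x y with h | h
  · rw [min_eq_left h, max_eq_right h]
  · rw [min_eq_right h, max_eq_left h, sub_sub, sub_sub, add_comm]

end Aux

/-- If the root vectors `ε_k − ε_i − ε_j` (one for each triple `(i,j,k)` with `i < j` and
`c_{ijk} ≠ 0`) of a nice basis of a nilpotent Lie algebra are linearly independent over
`ℝ`, then the nice diagram has no double arrows: `⁅e_k, ⁅e_i, e_j⁆⁆ = 0` whenever
`k ≠ i` and `k ≠ j`. -/
theorem no_double_arrows_of_surjective_root_matrix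
    (g : Type*) [LieRing g] [LieAlgebra ℝ g] [FiniteDimensional ℝ g]
    [LieRing.IsNilpotent g]
    {n : ℕ} (b : Module.Basis (Fin n) ℝ g) (hb : IsNiceBasis b)
    (hindep : LinearIndependent ℝ
      (fun p : {p : Fin n × Fin n × Fin n //
          p.1 < p.2.1 ∧ structConst b p.1 p.2.1 p.2.2 ≠ 0} =>
        (Pi.single p.1.2.2 1 - Pi.single p.1.1 1 - Pi.single p.1.2.1 1 : Fin n → ℝ))) :
    ∀ i j k : Fin n, k ≠ i → k ≠ j → ⁅b k, ⁅b i, b j⁆⁆ = 0 := by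
  classical
  intro i j k hki hkj
  obtain ⟨hb1, hb2⟩ := hb
  obtain ⟨m, c, hm⟩ := hb1 i j
  by_cases hc : c = 0
  · rw [hm, hc, zero_smul, lie_zero]
  have hij : i ≠ j := by
    rintro rfl
    rw [lie_self] at hm
    rcases smul_eq_zero.mp hm.symm with h | h
    · exact hc h
    · exact b.ne_zero m h
  obtain ⟨l, d, hl⟩ := hb1 k m
  by_cases hd : d = 0
  · rw [hm, lie_smul, hl, hd, zero_smul, smul_zero]
  exfalso
  have hkm : k ≠ m := by
    rintro rfl
    rw [lie_self] at hl
    rcases smul_eq_zero.mp hl.symm with h | h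
    · exact hd h
    · exact b.ne_zero l h
  have hml : m ≠ l := by
    rintro rfl
    exact hd (eigen_zero_of_nilpotent b (b k) d m hl)
  -- structure constants for the two known brackets
  have hcm : structConst b i j m = c := by rw [structConst_of_smul b hm]; simp
  have hdl : structConst b k m l = d := by rw [structConst_of_smul b hl]; simp
  -- Jacobi identity, coefficient at l
  obtain ⟨p, a1, hp⟩ := hb1 k i
  obtain ⟨q, a2, hq⟩ := hb1 k j
  have key : c * d = a1 * structConst b p j l + a2 * structConst b i q l := by
    have h1 : ⁅b k, ⁅b i, b j⁆⁆ = (c * d) • b l := by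
      rw [hm, lie_smul, hl, smul_smul]
    have h2 : ⁅b k, ⁅b i, b j⁆⁆ = a1 • ⁅b p, b j⁆ + a2 • ⁅b i, b q⁆ := by
      rw [leibniz_lie, hp, hq, smul_lie, lie_smul]
    have h3 := h1.symm.trans h2
    have h4 := congrArg (fun v => b.repr v l) h3
    simpa [structConst, Module.Basis.repr_self, mul_comm] using h4
  -- set up the index type
  set T := {p : Fin n × Fin n × Fin n //
      p.1 < p.2.1 ∧ structConst b p.1 p.2.1 p.2.2 ≠ 0} with hT
  have mk : ∀ x y z : Fin n, x ≠ y → structConst b x y z ≠ 0 →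
      ∃ t : T, t.1 = (min x y, max x y, z) := by
    intro x y z hxy hs
    refine ⟨⟨(min x y, max x y, z), min_lt_max.mpr hxy, ?_⟩, rfl⟩
    rcases le_total x y with h | h
    · rwa [min_eq_left h, max_eq_right h]
    · rw [min_eq_right h, max_eq_left h, structConst_swap]
      simpa using hs
  -- the root vector of any index
  set v : T → (Fin n → ℝ) := fun p =>
    (Pi.single p.1.2.2 1 - Pi.single p.1.1 1 - Pi.single p.1.2.1 1 : Fin n → ℝ) with hv
  have hvmk : ∀ (t : T) (x y z : Fin n), t.1 = (min x y, max x y, z) →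
      v t = Pi.single z 1 - Pi.single x 1 - Pi.single y 1 := by
    intro t x y z ht
    rw [hv]
    simp only [ht]
    exact single_minmax x y z
  -- the four triples
  obtain ⟨t1, ht1⟩ := mk i j m hij (hcm ▸ hc)
  obtain ⟨t2, ht2⟩ := mk k m l hkm (hdl ▸ hd)
  -- one of the two Jacobi terms is nonzero
  have hcd : c * d ≠ 0 := mul_ne_zero hc hd
  have hone : (a1 ≠ 0 ∧ structConst b p j l ≠ 0) ∨
      (a2 ≠ 0 ∧ structConst b i q l ≠ 0) := by
    by_contra h
    push_neg at h
    obtain ⟨h1, h2⟩ := h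
    apply hcd
    rw [key]
    rcases eq_or_ne a1 0 with ha | ha
    · rcases eq_or_ne a2 0 with ha2 | ha2
      · rw [ha, ha2]; ring
      · rw [ha, h2 ha2]; ring
    · rcases eq_or_ne a2 0 with ha2 | ha2
      · rw [h1 ha, ha2]; ring
      · rw [h1 ha, h2 ha2]; ring
  -- In either case build the two remaining triples and derive a contradiction
  have main : ∀ t3 t4 : T, t1 ≠ t2 → t1 ≠ t3 → t1 ≠ t4 →
      v t1 + v t2 - v t3 - v t4 = 0 → False := by
    intro t3 t4 h12 h13 h14 hsum
    have hLI := Fintype.linearIndependent_iff.mp hindep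
    set gf : T → ℝ := fun t =>
      (if t = t1 then 1 else 0) + (if t = t2 then 1 else 0)
        - (if t = t3 then 1 else 0) - (if t = t4 then 1 else 0) with hgf
    have hsum' : ∑ t : T, gf t • v t = 0 := by
      have : ∀ t : T, gf t • v t =
          (if t = t1 then v t else 0) + (if t = t2 then v t else 0)
            - (if t = t3 then v t else 0) - (if t = t4 then v t else 0) := by
        intro t
        rw [hgf]
        simp only [add_smul, sub_smul, ite_smul, one_smul, zero_smul]
      rw [Finset.sum_congr rfl (fun t _ => this t)]
      simp only [Finset.sum_sub_distrib, Finset.sum_add_distrib,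
        Finset.sum_ite_eq' Finset.univ, Finset.mem_univ, if_true]
      rw [Finset.sum_ite_eq', Finset.sum_ite_eq', Finset.sum_ite_eq', Finset.sum_ite_eq']
      simpa using hsum
    have := hLI gf hsum' t1
    rw [hgf] at this
    simp only [if_pos rfl, if_neg h12, if_neg h13, if_neg h14] at this
    norm_num at this
  -- disequality from the targets
  have htarget : ∀ t t' : T, ∀ x y z x' y' z' : Fin n,
      t.1 = (min x y, max x y, z) → t'.1 = (min x' y' , max x' y', z') →
      z ≠ z' → t ≠ t' := by
    intro t t' x y z x' y' z' ht ht' hzz' h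
    apply hzz'
    have := congrArg (fun s : T => s.1.2.2) h
    simp only [ht, ht'] at this
    exact this
  rcases hone with ⟨ha1, hpj⟩ | ⟨ha2, hiq⟩
  · -- case A : through ⁅⁅e_k, e_i⁆, e_j⁆
    have hpj' : p ≠ j := by
      rintro rfl
      apply hpj
      simp [structConst]
    have hkip : structConst b k i p ≠ 0 := by
      rw [structConst_of_smul b hp]; simpa using ha1
    obtain ⟨t3, ht3⟩ := mk k i p hki hkip
    obtain ⟨t4, ht4⟩ := mk p j l hpj' hpj
    refine main t3 t4 (htarget t1 t2 i j m k m l ht1 ht2 hml)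
      ?_ (htarget t1 t4 i j m p j l ht1 ht4 hml) ?_
    · -- t1 ≠ t3
      intro h
      rw [h, ht3] at ht1
      have h1 : min k i = min i j := congrArg Prod.fst ht1
      have h2 : max k i = max i j := congrArg (fun s : _ × _ × _ => s.2.1) ht1
      rcases pair_eq h1 h2 with ⟨hik, _⟩ | ⟨hjk, _⟩
      · exact hki hik
      · exact hkj hjk
    · -- the vector relation
      rw [hvmk t1 i j m ht1, hvmk t2 k m l ht2, hvmk t3 k i p ht3, hvmk t4 p j l ht4]
      abel
  · -- case B : through ⁅e_i, ⁅e_k, e_j⁆⁆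
    have hiq' : i ≠ q := by
      rintro rfl
      apply hiq
      simp [structConst]
    have hkjq : structConst b k j q ≠ 0 := by
      rw [structConst_of_smul b hq]; simpa using ha2
    obtain ⟨t3, ht3⟩ := mk k j q hkj hkjq
    obtain ⟨t4, ht4⟩ := mk i q l hiq' hiq
    refine main t3 t4 (htarget t1 t2 i j m k m l ht1 ht2 hml)
      ?_ (htarget t1 t4 i j m i q l ht1 ht4 hml) ?_
    · intro h
      rw [h, ht3] at ht1
      have h1 : min k j = min i j := congrArg Prod.fst ht1
      have h2 : max k j = max i j := congrArg (fun s : _ × _ × _ => s.2.1) ht1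
      rcases pair_eq h1 h2 with ⟨hik, _⟩ | ⟨hkj', _⟩
      · exact hki hik
      · exact hkj hkj'
    · rw [hvmk t1 i j m ht1, hvmk t2 k m l ht2, hvmk t3 k j q ht3, hvmk t4 i q l ht4]
      abel
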